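/- Define W = Σ_{i=1}^m P_i ⊗ X_i + v v† ⊗ I on ℂ^m ⊗ ℂ^n, where P_i = e_i e_i† for an orthonormal basis e_1,…,e_m, v = Σ_k k e_k, and X_1,…,X_m are traceless Hermitian operators on ℂ^n such that X_1,…,X_m, I are linearly independent and the only unitaries commuting with all X_i are scalars. Then any U ⊗ V ∈ U(m) ⊗ U(n) satisfying (U ⊗ V) W (U† ⊗ V†) = W has U and V both scalar multiples of the identity. -/

import Mathlib

open Matrix Kronecker

lemma stmt8_rank_one_conj {m : ℕ} (M : Matrix (Fin m) (Fin m) ℂ) (a : Fin m → ℂ) :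
    M * vecMulVec a (star a) * Mᴴ = vecMulVec (M.mulVec a) (star (M.mulVec a)) := by
  ext x y
  simp only [mul_apply, conjTranspose_apply, vecMulVec_apply, mulVec, dotProduct,
    Pi.star_apply, star_sum, star_mul', star_star, Finset.sum_mul, Finset.mul_sum]
  refine Finset.sum_congr rfl fun q _ => Finset.sum_congr rfl fun p _ => by ring

lemma stmt8_dot_rank_one {m : ℕ} (a b c : Fin m → ℂ) :
    star a ⬝ᵥ (vecMulVec c (star c)).mulVec b = (star a ⬝ᵥ c) * star (star b ⬝ᵥ c) := by
  simp only [dotProduct, mulVec, vecMulVec_apply, Pi.star_apply, star_sum, star_mul',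
    star_star, Finset.sum_mul, Finset.mul_sum]
  conv_rhs => rw [Finset.sum_comm]
  refine Finset.sum_congr rfl fun q _ => Finset.sum_congr rfl fun p _ => by ring

noncomputable def stmt8_cmp {m n : ℕ} (a b : Fin m → ℂ)
    (M : Matrix (Fin m × Fin n) (Fin m × Fin n) ℂ) : Matrix (Fin n) (Fin n) ℂ :=
  Matrix.of fun r s => ∑ x, ∑ y, star (a x) * M (x, r) (y, s) * b y

lemma stmt8_cmp_add {m n : ℕ} (a b : Fin m → ℂ)
    (M N : Matrix (Fin m × Fin n) (Fin m × Fin n) ℂ) :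
    stmt8_cmp a b (M + N) = stmt8_cmp a b M + stmt8_cmp a b N := by
  ext r s
  simp [stmt8_cmp, mul_add, add_mul, Finset.sum_add_distrib]

lemma stmt8_cmp_sum {m n : ℕ} (a b : Fin m → ℂ) {ι : Type*} (t : Finset ι)
    (f : ι → Matrix (Fin m × Fin n) (Fin m × Fin n) ℂ) :
    stmt8_cmp a b (∑ i ∈ t, f i) = ∑ i ∈ t, stmt8_cmp a b (f i) := by
  ext r s
  simp only [stmt8_cmp, Matrix.of_apply, Matrix.sum_apply, Finset.mul_sum, Finset.sum_mul]
  conv_rhs => rw [Finset.sum_comm]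
  exact Finset.sum_congr rfl fun x _ => Finset.sum_comm

lemma stmt8_cmp_kron {m n : ℕ} (a b : Fin m → ℂ) (A : Matrix (Fin m) (Fin m) ℂ)
    (B : Matrix (Fin n) (Fin n) ℂ) :
    stmt8_cmp a b (A ⊗ₖ B) = (star a ⬝ᵥ A.mulVec b) • B := by
  ext r s
  simp only [stmt8_cmp, Matrix.of_apply, kroneckerMap_apply, dotProduct, mulVec, Matrix.smul_apply,
    Pi.star_apply, smul_eq_mul, Finset.sum_mul, Finset.mul_sum]
  refine Finset.sum_congr rfl fun x _ => Finset.sum_congr rfl fun y _ => by ring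

lemma stmt8_herm_indep {n : ℕ} {ι : Type*} [Fintype ι] {H : ι → Matrix (Fin n) (Fin n) ℂ}
    (hH : ∀ i, (H i).IsHermitian) (hli : LinearIndependent ℝ H) {c : ι → ℂ}
    (hc : ∑ i, c i • H i = 0) : ∀ i, c i = 0 := by
  have hconj : ∑ i, (starRingEnd ℂ) (c i) • H i = 0 := by
    have h := congrArg Matrix.conjTranspose hc
    rw [Matrix.conjTranspose_zero] at h
    rw [← h]
    rw [Matrix.conjTranspose_sum]
    exact Finset.sum_congr rfl fun i _ => by
      rw [Matrix.conjTranspose_smul, (hH i).eq, starRingEnd_apply]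
  have hre : ∀ i, (c i).re = 0 := by
    refine Fintype.linearIndependent_iff.mp hli (fun i => (c i).re) ?_
    have h2 : ∑ i, (((c i).re : ℂ)) • H i = 0 := by
      have hterm : ∀ i, (((c i).re : ℂ)) • H i
          = (2⁻¹ : ℂ) • (c i • H i + (starRingEnd ℂ) (c i) • H i) := by
        intro i
        rw [← add_smul, Complex.add_conj, smul_smul]
        congr 1
        push_cast
        ring
      rw [Finset.sum_congr rfl fun i _ => hterm i, ← Finset.smul_sum,
        Finset.sum_add_distrib, hc, hconj, add_zero, smul_zero]
    simpa only [Complex.coe_smul] using h2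
  have him : ∀ i, (c i).im = 0 := by
    refine Fintype.linearIndependent_iff.mp hli (fun i => (c i).im) ?_
    have h2 : ∑ i, (((c i).im : ℂ)) • H i = 0 := by
      have hterm : ∀ i, (((c i).im : ℂ)) • H i
          = ((2 * Complex.I)⁻¹ : ℂ) • (c i • H i - (starRingEnd ℂ) (c i) • H i) := by
        intro i
        rw [← sub_smul, Complex.sub_conj, smul_smul]
        congr 1
        push_cast
        have : (Complex.I : ℂ) ≠ 0 := Complex.I_ne_zero
        field_simp
      rw [Finset.sum_congr rfl fun i _ => hterm i, ← Finset.smul_sum,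
        Finset.sum_sub_distrib, hc, hconj, sub_zero, smul_zero]
    simpa only [Complex.coe_smul] using h2
  intro i
  exact Complex.ext (hre i) (him i)

noncomputable def stmt8_conj (n : ℕ) (V : Matrix (Fin n) (Fin n) ℂ) :
    Matrix (Fin n) (Fin n) ℂ →ₗ[ℝ] Matrix (Fin n) (Fin n) ℂ where
  toFun := fun M => V * M * Vᴴ
  map_add' := fun A B => by rw [Matrix.mul_add, Matrix.add_mul]
  map_smul' := fun r A => by
    rw [RingHom.id_apply, Matrix.mul_smul, Matrix.smul_mul]

@[simp] lemma stmt8_conj_apply (n : ℕ) (V M : Matrix (Fin n) (Fin n) ℂ) :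
    stmt8_conj n V M = V * M * Vᴴ := rfl

lemma stmt8_conj_ker (n : ℕ) (V : Matrix (Fin n) (Fin n) ℂ) (hV1 : Vᴴ * V = 1) :
    LinearMap.ker (stmt8_conj n V) = ⊥ := by
  rw [LinearMap.ker_eq_bot]
  have hcancel : ∀ C : Matrix (Fin n) (Fin n) ℂ, Vᴴ * (V * C * Vᴴ) * V = C := by
    intro C
    rw [← Matrix.mul_assoc, ← Matrix.mul_assoc, hV1, Matrix.one_mul,
      Matrix.mul_assoc, hV1, Matrix.mul_one]
  intro A B hAB
  rw [stmt8_conj_apply, stmt8_conj_apply] at hAB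
  rw [← hcancel A, hAB, hcancel B]

lemma stmt8_dot_sum_smul {m : ℕ} (a : Fin m → ℂ) (c : Fin m → ℂ) (f : Fin m → Fin m → ℂ) :
    star a ⬝ᵥ (∑ k, c k • f k) = ∑ k, c k * (star a ⬝ᵥ f k) := by
  simp only [dotProduct, Finset.sum_apply, Pi.smul_apply, smul_eq_mul, Finset.mul_sum]
  rw [Finset.sum_comm]
  refine Finset.sum_congr rfl fun q _ => Finset.sum_congr rfl fun p _ => by ring

/-- With `W = ∑ i, P i ⊗ₖ X i + v vᴴ ⊗ₖ 1` built from an orthonormal basis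
`e`, `v = ∑ k, (k+1) • e k`, and traceless Hermitian `X i` such that `1, X 1, …, X m` are
`ℝ`-linearly independent and only scalar unitaries commute with all `X i`, every
`U ⊗ V ∈ U(m) ⊗ U(n)` stabilizing `W` under conjugation has `U` and `V` scalar. -/
theorem stmt_8 (m n : ℕ) (e : Fin m → (Fin m → ℂ))
    (he : ∀ i j, star (e i) ⬝ᵥ e j = if i = j then 1 else 0)
    (P : Fin m → Matrix (Fin m) (Fin m) ℂ)
    (hP : ∀ i, P i = vecMulVec (e i) (star (e i)))
    (v : Fin m → ℂ) (hv : v = ∑ k : Fin m, ((k.1 + 1 : ℕ) : ℂ) • e k)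
    (X : Fin m → Matrix (Fin n) (Fin n) ℂ)
    (hXh : ∀ i, (X i).IsHermitian) (hXtr : ∀ i, (X i).trace = 0)
    (hXli : LinearIndependent ℝ (Fin.cons (1 : Matrix (Fin n) (Fin n) ℂ) X))
    (hXcent : ∀ V ∈ Matrix.unitaryGroup (Fin n) ℂ,
      (∀ i, V * X i * Vᴴ = X i) → ∃ c : ℂ, V = c • (1 : Matrix (Fin n) (Fin n) ℂ))
    (W : Matrix (Fin m × Fin n) (Fin m × Fin n) ℂ)
    (hW : W = ∑ i, P i ⊗ₖ X i + vecMulVec v (star v) ⊗ₖ (1 : Matrix (Fin n) (Fin n) ℂ))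
    (U : Matrix (Fin m) (Fin m) ℂ) (hU : U ∈ Matrix.unitaryGroup (Fin m) ℂ)
    (V : Matrix (Fin n) (Fin n) ℂ) (hV : V ∈ Matrix.unitaryGroup (Fin n) ℂ)
    (hstab : (U ⊗ₖ V) * W * (Uᴴ ⊗ₖ Vᴴ) = W) :
    (∃ a : ℂ, ‖a‖ = 1 ∧ U = a • (1 : Matrix (Fin m) (Fin m) ℂ)) ∧
    (∃ b : ℂ, ‖b‖ = 1 ∧ V = b • (1 : Matrix (Fin n) (Fin n) ℂ)) := by
  classical
  -- n ≥ 1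
  have hone : (1 : Matrix (Fin n) (Fin n) ℂ) ≠ 0 := by
    simpa using hXli.ne_zero 0
  have hn : 0 < n := by
    rcases Nat.eq_zero_or_pos n with h | h
    · exact absurd (by subst h; ext i j; exact i.elim0) hone
    · exact h
  obtain ⟨hV1, hV2⟩ := Unitary.mem_iff.mp hV
  obtain ⟨hU1, hU2⟩ := Unitary.mem_iff.mp hU
  rw [Matrix.star_eq_conjTranspose] at hV1 hV2 hU1 hU2
  -- a generic extraction of |b|=1 for scalar unitaries
  have habs : ∀ b : ℂ, star b * b = 1 → ‖b‖ = 1 := by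
    intro b hb
    have h := congrArg norm hb
    rw [norm_mul, norm_one] at h
    rw [norm_star] at h
    rcases mul_self_eq_one_iff.mp h with h' | h'
    · exact h'
    · exfalso
      have hnn : (0:ℝ) ≤ ‖b‖ := norm_nonneg b
      linarith
  -- scalar form of V once we know it commutes
  have hVscalar : (∀ i, V * X i * Vᴴ = X i) →
      ∃ b : ℂ, ‖b‖ = 1 ∧ V = b • (1 : Matrix (Fin n) (Fin n) ℂ) := by
    intro hcomm
    obtain ⟨c, hc⟩ := hXcent V hV hcomm
    refine ⟨c, ?_, hc⟩
    apply habs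
    have h := hV1
    rw [hc, Matrix.conjTranspose_smul, Matrix.smul_mul, Matrix.mul_smul,
      Matrix.mul_one, smul_smul, Matrix.conjTranspose_one] at h
    have h0 := congrFun (congrFun h ⟨0, hn⟩) ⟨0, hn⟩
    simpa [Matrix.smul_apply, Matrix.one_apply] using h0
  -- orthogonality facts on v
  have hev : ∀ j, star (e j) ⬝ᵥ v = ((j.1 + 1 : ℕ) : ℂ) := by
    intro j
    rw [hv, stmt8_dot_sum_smul]
    simp [he, mul_ite, Finset.sum_ite_eq]
  -- expansion of the conjugated W
  have hL : (∑ i, (vecMulVec (U.mulVec (e i)) (star (U.mulVec (e i)))) ⊗ₖ (V * X i * Vᴴ))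
      + (vecMulVec (U.mulVec v) (star (U.mulVec v))) ⊗ₖ (1 : Matrix (Fin n) (Fin n) ℂ) = W := by
    rw [← hstab, hW, Matrix.mul_add, Matrix.add_mul, Matrix.mul_sum, Matrix.sum_mul]
    congr 1
    · refine Finset.sum_congr rfl fun i _ => ?_
      rw [hP i, ← Matrix.mul_kronecker_mul, ← Matrix.mul_kronecker_mul, stmt8_rank_one_conj]
    · rw [← Matrix.mul_kronecker_mul, ← Matrix.mul_kronecker_mul, stmt8_rank_one_conj,
        Matrix.mul_one, hV2]
  -- the diagonal-sum identity
  have hXsum : ∀ j k : Fin m,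
      ∑ i, ((star (e j) ⬝ᵥ e i) * star (star (e k) ⬝ᵥ e i)) • X i
        = if j = k then X j else 0 := by
    intro j k
    have h1 : ∀ i, ((star (e j) ⬝ᵥ e i) * star (star (e k) ⬝ᵥ e i) : ℂ)
        = if i = j ∧ i = k then 1 else 0 := by
      intro i
      rw [he j i, he k i]
      by_cases hji : j = i <;> by_cases hki : k = i <;>
        simp [hji, hki, eq_comm]
    rw [Finset.sum_congr rfl fun i _ => by rw [h1 i]]
    by_cases hjk : j = k
    · subst hjk
      simp [ite_smul]
    · have hno : ∀ i : Fin m, ¬(i = j ∧ i = k) := fun i ⟨a, b⟩ => hjk (a ▸ b)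
      simp [hno, hjk]
  -- the key compressed equations
  have key : ∀ j k : Fin m,
      (∑ i, ((star (e j) ⬝ᵥ U.mulVec (e i)) * star (star (e k) ⬝ᵥ U.mulVec (e i)))
          • (V * X i * Vᴴ))
        + ((star (e j) ⬝ᵥ U.mulVec v) * star (star (e k) ⬝ᵥ U.mulVec v))
          • (1 : Matrix (Fin n) (Fin n) ℂ)
      = (if j = k then X j else 0)
        + (((j.1 + 1 : ℕ) : ℂ) * ((k.1 + 1 : ℕ) : ℂ)) • 1 := by
    intro j k
    have h := congrArg (stmt8_cmp (e j) (e k)) hL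
    rw [hW] at h
    simp only [stmt8_cmp_add, stmt8_cmp_sum, hP, stmt8_cmp_kron, stmt8_dot_rank_one] at h
    rw [hXsum j k, hev j, hev k, star_natCast] at h
    exact h
  have hNne : ∀ j : Fin m, ((j.1 + 1 : ℕ) : ℂ) ≠ 0 := fun j =>
    Nat.cast_ne_zero.mpr (Nat.succ_ne_zero _)
  have hncast : ((n : ℕ) : ℂ) ≠ 0 := Nat.cast_ne_zero.mpr hn.ne'
  have htrY : ∀ i, (V * X i * Vᴴ).trace = 0 := by
    intro i
    rw [Matrix.trace_mul_comm (V * X i) Vᴴ, ← Matrix.mul_assoc, hV1, Matrix.one_mul]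
    exact hXtr i
  -- diagonal trace identity: |w j|² = (j+1)²
  have htr : ∀ j, (star (e j) ⬝ᵥ U.mulVec v) * star (star (e j) ⬝ᵥ U.mulVec v)
      = ((j.1 + 1 : ℕ) : ℂ) * ((j.1 + 1 : ℕ) : ℂ) := by
    intro j
    have h := congrArg Matrix.trace (key j j)
    rw [if_pos rfl] at h
    simp only [Matrix.trace_add, Matrix.trace_sum, Matrix.trace_smul, htrY, smul_zero,
      Finset.sum_const_zero, zero_add, Matrix.trace_one, hXtr, smul_eq_mul,
      Fintype.card_fin, mul_zero] at h
    exact mul_right_cancel₀ hncast h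
  -- linear independence of the conjugated family
  have hYh : ∀ i : Fin (m + 1),
      (((Fin.cons (1 : Matrix (Fin n) (Fin n) ℂ) (fun i => V * X i * Vᴴ)) :
        Fin (m + 1) → Matrix (Fin n) (Fin n) ℂ) i).IsHermitian := by
    intro i
    refine Fin.cases ?_ (fun i => ?_) i
    · rw [Fin.cons_zero]; exact Matrix.isHermitian_one
    · rw [Fin.cons_succ]
      show (V * X i * Vᴴ)ᴴ = V * X i * Vᴴ
      simp only [Matrix.conjTranspose_mul, Matrix.conjTranspose_conjTranspose, (hXh i).eq,
        Matrix.mul_assoc]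
  have hYli : LinearIndependent ℝ
      (Fin.cons (1 : Matrix (Fin n) (Fin n) ℂ) (fun i => V * X i * Vᴴ)) := by
    have hmap := hXli.map' (stmt8_conj n V) (stmt8_conj_ker n V hV1)
    have heq : (⇑(stmt8_conj n V) ∘ Fin.cons (1 : Matrix (Fin n) (Fin n) ℂ) X)
        = Fin.cons (1 : Matrix (Fin n) (Fin n) ℂ) (fun i => V * X i * Vᴴ) := by
      funext i
      refine Fin.cases ?_ (fun i => ?_) i
      · rw [Function.comp_apply, Fin.cons_zero, Fin.cons_zero, stmt8_conj_apply,
          Matrix.mul_one, hV2]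
      · rw [Function.comp_apply, Fin.cons_succ, Fin.cons_succ, stmt8_conj_apply]
    rwa [heq] at hmap
  -- off-diagonal coefficients vanish
  have hoff : ∀ j k : Fin m, j ≠ k →
      (∀ i, (star (e j) ⬝ᵥ U.mulVec (e i)) * star (star (e k) ⬝ᵥ U.mulVec (e i)) = 0) ∧
      (star (e j) ⬝ᵥ U.mulVec v) * star (star (e k) ⬝ᵥ U.mulVec v)
        = ((j.1 + 1 : ℕ) : ℂ) * ((k.1 + 1 : ℕ) : ℂ) := by
    intro j k hjk
    have hk0 := key j k
    rw [if_neg hjk, zero_add] at hk0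
    have hsum : ∑ i : Fin (m + 1),
        ((Fin.cons ((star (e j) ⬝ᵥ U.mulVec v) * star (star (e k) ⬝ᵥ U.mulVec v)
            - ((j.1 + 1 : ℕ) : ℂ) * ((k.1 + 1 : ℕ) : ℂ))
          (fun i => (star (e j) ⬝ᵥ U.mulVec (e i)) * star (star (e k) ⬝ᵥ U.mulVec (e i))) :
            Fin (m + 1) → ℂ) i)
        • (((Fin.cons (1 : Matrix (Fin n) (Fin n) ℂ) (fun i => V * X i * Vᴴ)) :
            Fin (m + 1) → Matrix (Fin n) (Fin n) ℂ) i) = 0 := by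
      rw [Fin.sum_univ_succ]
      simp only [Fin.cons_zero, Fin.cons_succ]
      rw [sub_smul, sub_add_eq_add_sub, sub_eq_zero, add_comm]
      exact hk0
    have hall := stmt8_herm_indep hYh hYli hsum
    constructor
    · intro i
      have := hall i.succ
      rwa [Fin.cons_succ] at this
    · have := hall 0
      rwa [Fin.cons_zero, sub_eq_zero] at this
  -- change of basis matrix
  have hEHE : (Matrix.of fun x i => e i x : Matrix (Fin m) (Fin m) ℂ)ᴴ *
      (Matrix.of fun x i => e i x) = 1 := by
    ext i j
    simpa [Matrix.mul_apply, Matrix.conjTranspose_apply, dotProduct, Matrix.one_apply]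
      using he i j
  have hEmem : (Matrix.of fun x i => e i x : Matrix (Fin m) (Fin m) ℂ) ∈
      Matrix.unitaryGroup (Fin m) ℂ := by
    rw [Matrix.mem_unitaryGroup_iff', Matrix.star_eq_conjTranspose]
    exact hEHE
  have hUtmem : ((Matrix.of fun x i => e i x)ᴴ * U * (Matrix.of fun x i => e i x)) ∈
      Matrix.unitaryGroup (Fin m) ℂ := by
    have h := mul_mem (mul_mem (Unitary.star_mem hEmem) hU) hEmem
    rwa [Matrix.star_eq_conjTranspose] at h
  have hUt_apply : ∀ j i, ((Matrix.of fun x i => e i x)ᴴ * U * (Matrix.of fun x i => e i x)) j i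
      = star (e j) ⬝ᵥ U.mulVec (e i) := by
    intro j i
    simp only [Matrix.mul_apply, Matrix.conjTranspose_apply, Matrix.of_apply, dotProduct,
      Matrix.mulVec, Pi.star_apply, Finset.sum_mul, Finset.mul_sum]
    conv_rhs => rw [Finset.sum_comm]
    refine Finset.sum_congr rfl fun x _ => Finset.sum_congr rfl fun y _ => by ring
  have hcol : ∀ i i' : Fin m, ∑ j, star (star (e j) ⬝ᵥ U.mulVec (e i)) *
      (star (e j) ⬝ᵥ U.mulVec (e i')) = if i = i' then 1 else 0 := by
    intro i i'
    have h := Matrix.mem_unitaryGroup_iff'.mp hUtmem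
    have h0 := congrFun (congrFun h i) i'
    simp only [Matrix.mul_apply, Matrix.star_apply, Matrix.one_apply, hUt_apply] at h0
    exact h0
  -- expansion of w in terms of the column entries
  have hwdef : ∀ j, star (e j) ⬝ᵥ U.mulVec v
      = ∑ i, ((i.1 + 1 : ℕ) : ℂ) * (star (e j) ⬝ᵥ U.mulVec (e i)) := by
    intro j
    have hUv : U.mulVec v = ∑ i, ((i.1 + 1 : ℕ) : ℂ) • U.mulVec (e i) := by
      rw [hv, ← Matrix.mulVecLin_apply, map_sum]
      refine Finset.sum_congr rfl fun i _ => ?_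
      rw [_root_.map_smul, Matrix.mulVecLin_apply]
    rw [hUv, stmt8_dot_sum_smul]
  rcases Nat.eq_zero_or_pos m with hm | hm
  · subst hm
    exact ⟨⟨1, by simp, by ext i j; exact i.elim0⟩, hVscalar (fun i => i.elim0)⟩
  -- each column has a unique nonzero entry
  have hexists : ∀ i : Fin m, ∃ j, star (e j) ⬝ᵥ U.mulVec (e i) ≠ 0 := by
    intro i
    by_contra hcon
    push_neg at hcon
    have h := hcol i i
    rw [if_pos rfl] at h
    simp [hcon] at h
  choose σ hσ using hexists
  have hzero : ∀ j i, j ≠ σ i → star (e j) ⬝ᵥ U.mulVec (e i) = 0 := by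
    intro j i hne
    by_contra hcon
    exact (mul_ne_zero hcon (star_ne_zero.mpr (hσ i))) ((hoff j (σ i) hne).1 i)
  have hnormσ : ∀ i, star (star (e (σ i)) ⬝ᵥ U.mulVec (e i))
      * (star (e (σ i)) ⬝ᵥ U.mulVec (e i)) = 1 := by
    intro i
    have h := hcol i i
    rw [if_pos rfl] at h
    rw [← h]
    exact (Finset.sum_eq_single
      (f := fun j => star (star (e j) ⬝ᵥ U.mulVec (e i)) * (star (e j) ⬝ᵥ U.mulVec (e i)))
      (σ i) (fun b _ hb => by simp [hzero b i hb])
      (fun hmem => absurd (Finset.mem_univ _) hmem)).symm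
  have hinj : Function.Injective σ := by
    intro i i' hσeq
    by_contra hne
    have h := hcol i i'
    rw [if_neg hne] at h
    have hs : ∑ j, star (star (e j) ⬝ᵥ U.mulVec (e i)) * (star (e j) ⬝ᵥ U.mulVec (e i'))
        = star (star (e (σ i)) ⬝ᵥ U.mulVec (e i)) * (star (e (σ i)) ⬝ᵥ U.mulVec (e i')) :=
      Finset.sum_eq_single
        (f := fun j => star (star (e j) ⬝ᵥ U.mulVec (e i)) * (star (e j) ⬝ᵥ U.mulVec (e i')))
        (σ i) (fun b _ hb => by simp [hzero b i hb])
        (fun hmem => absurd (Finset.mem_univ _) hmem)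
    rw [hs] at h
    refine mul_ne_zero (star_ne_zero.mpr (hσ i)) ?_ h
    rw [hσeq]
    exact hσ i'
  have hwσ : ∀ i, star (e (σ i)) ⬝ᵥ U.mulVec v
      = ((i.1 + 1 : ℕ) : ℂ) * (star (e (σ i)) ⬝ᵥ U.mulVec (e i)) := by
    intro i
    rw [hwdef (σ i)]
    refine Finset.sum_eq_single i (fun b _ hb => ?_)
      (fun hmem => absurd (Finset.mem_univ _) hmem)
    have hne : σ i ≠ σ b := fun hh => hb (hinj hh).symm
    rw [hzero (σ i) b hne, mul_zero]
  have hσid : ∀ i, σ i = i := by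
    intro i
    have h1 := htr (σ i)
    rw [hwσ i, star_mul', star_natCast] at h1
    have h3 : (star (e (σ i)) ⬝ᵥ U.mulVec (e i))
        * star (star (e (σ i)) ⬝ᵥ U.mulVec (e i)) = 1 := by
      rw [mul_comm]
      exact hnormσ i
    have h2 : (((i.1 + 1 : ℕ) : ℂ) * ((i.1 + 1 : ℕ) : ℂ))
        = (((σ i).1 + 1 : ℕ) : ℂ) * (((σ i).1 + 1 : ℕ) : ℂ) := by
      rw [← h1]
      calc ((i.1+1:ℕ):ℂ) * ((i.1+1:ℕ):ℂ)
          = (((i.1+1:ℕ):ℂ) * ((i.1+1:ℕ):ℂ)) * ((star (e (σ i)) ⬝ᵥ U.mulVec (e i))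
            * star (star (e (σ i)) ⬝ᵥ U.mulVec (e i))) := by rw [h3, mul_one]
        _ = ((i.1+1:ℕ):ℂ) * (star (e (σ i)) ⬝ᵥ U.mulVec (e i))
            * (((i.1+1:ℕ):ℂ) * star (star (e (σ i)) ⬝ᵥ U.mulVec (e i))) := by ring
    have h4 : (i.1 + 1) * (i.1 + 1) = ((σ i).1 + 1) * ((σ i).1 + 1) := by
      exact_mod_cast h2
    have h5 : i.1 = (σ i).1 := by nlinarith
    exact (Fin.ext h5.symm)
  have hdiag0 : ∀ j i : Fin m, j ≠ i → star (e j) ⬝ᵥ U.mulVec (e i) = 0 := by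
    intro j i hne
    exact hzero j i (by rw [hσid i]; exact hne)
  have hnorm : ∀ i : Fin m, star (star (e i) ⬝ᵥ U.mulVec (e i))
      * (star (e i) ⬝ᵥ U.mulVec (e i)) = 1 := by
    intro i
    have h := hnormσ i
    rwa [hσid i] at h
  have hwii : ∀ i : Fin m, star (e i) ⬝ᵥ U.mulVec v
      = ((i.1 + 1 : ℕ) : ℂ) * (star (e i) ⬝ᵥ U.mulVec (e i)) := by
    intro i
    have h := hwσ i
    rwa [hσid i] at h
  have hconst : ∀ j k : Fin m,
      star (e j) ⬝ᵥ U.mulVec (e j) = star (e k) ⬝ᵥ U.mulVec (e k) := by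
    intro j k
    rcases eq_or_ne j k with rfl | hne
    · rfl
    have h := (hoff j k hne).2
    rw [hwii j, hwii k, star_mul', star_natCast] at h
    have h2 : (((j.1+1:ℕ):ℂ) * ((k.1+1:ℕ):ℂ))
        * ((star (e j) ⬝ᵥ U.mulVec (e j)) * star (star (e k) ⬝ᵥ U.mulVec (e k)))
        = (((j.1+1:ℕ):ℂ) * ((k.1+1:ℕ):ℂ)) * 1 := by
      linear_combination h
    have h3 := mul_left_cancel₀ (mul_ne_zero (hNne j) (hNne k)) h2
    linear_combination (star (e k) ⬝ᵥ U.mulVec (e k)) * h3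
      - (star (e j) ⬝ᵥ U.mulVec (e j)) * hnorm k
  have i0 : Fin m := ⟨0, hm⟩
  constructor
  · refine ⟨star (e i0) ⬝ᵥ U.mulVec (e i0), habs _ (hnorm i0), ?_⟩
    have hUt1 : ((Matrix.of fun x i => e i x)ᴴ * U * (Matrix.of fun x i => e i x))
        = (star (e i0) ⬝ᵥ U.mulVec (e i0)) • (1 : Matrix (Fin m) (Fin m) ℂ) := by
      ext j i
      rw [hUt_apply j i]
      rcases eq_or_ne j i with rfl | hne
      · rw [Matrix.smul_apply, Matrix.one_apply_eq, smul_eq_mul, mul_one]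
        exact hconst j i0
      · rw [Matrix.smul_apply, Matrix.one_apply_ne hne, smul_eq_mul, mul_zero]
        exact hdiag0 j i hne
    have hEEH : (Matrix.of fun x i => e i x : Matrix (Fin m) (Fin m) ℂ) *
        (Matrix.of fun x i => e i x)ᴴ = 1 := mul_eq_one_comm.mp hEHE
    have hrec : (Matrix.of fun x i => e i x : Matrix (Fin m) (Fin m) ℂ) *
        ((Matrix.of fun x i => e i x)ᴴ * U * (Matrix.of fun x i => e i x)) *
        (Matrix.of fun x i => e i x)ᴴ = U := by
      rw [← Matrix.mul_assoc, ← Matrix.mul_assoc, hEEH, Matrix.one_mul,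
        Matrix.mul_assoc, hEEH, Matrix.mul_one]
    conv_lhs => rw [← hrec, hUt1, Matrix.mul_smul, Matrix.mul_one, Matrix.smul_mul, hEEH]
  · apply hVscalar
    intro i
    have hk := key i i
    rw [if_pos rfl] at hk
    have hs : ∑ i', ((star (e i) ⬝ᵥ U.mulVec (e i'))
        * star (star (e i) ⬝ᵥ U.mulVec (e i'))) • (V * X i' * Vᴴ) = V * X i * Vᴴ := by
      have hss := Finset.sum_eq_single
        (f := fun i' => ((star (e i) ⬝ᵥ U.mulVec (e i'))
          * star (star (e i) ⬝ᵥ U.mulVec (e i'))) • (V * X i' * Vᴴ)) i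
        (fun b _ hb => by simp [hdiag0 i b (Ne.symm hb)])
        (fun hmem => absurd (Finset.mem_univ _) hmem)
      rw [hss]
      have hone' : (star (e i) ⬝ᵥ U.mulVec (e i))
          * star (star (e i) ⬝ᵥ U.mulVec (e i)) = 1 := by
        rw [mul_comm]
        exact hnorm i
      show ((star (e i) ⬝ᵥ U.mulVec (e i))
          * star (star (e i) ⬝ᵥ U.mulVec (e i))) • (V * X i * Vᴴ) = V * X i * Vᴴ
      rw [hone', one_smul]
    rw [hs, htr i] at hk
    exact add_right_cancel hk
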